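/- Let G and G' be two contracting similarity operators on L_p[0,1] (1 ≤ p < ∞) sharing the same partition parameters {a_k} but with parameters (c_k, d_k, β_k) and (c'_k, d'_k, β'_k), both satisfying r_p = ∑ a_k|d_k|^p < 1 and r'_p = ∑ a_k|d'_k|^p < 1, with fixed points f and g respectively. Then ‖f - g‖_{L_p[0,1]} ≤ [2^p ‖{c-c', β-β'}‖_{p,a} + 2^{p-1} (∑_{k=1}^n a_k|d_k - d'_k|^p)^{1/p} (‖f‖_{L_p} + ‖g‖_{L_p})] / (2 - r_p^{1/p} - (r'_p)^{1/p}). In particular, the fixed point depends continuously on the parameters (c_k, d_k, β_k). -/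

import Mathlib

open MeasureTheory Set Finset ENNReal

lemma alpha_eq (a : ℕ → ℝ) (α : ℕ → ℝ) (hα0 : α 0 = 0) (hα : ∀ k, α (k + 1) = α k + a k) :
    ∀ k, α k = ∑ j ∈ Finset.range k, a j := by
  intro k
  induction k with
  | zero => simpa using hα0
  | succ k ih => rw [hα, ih, Finset.sum_range_succ]

lemma lint_biUnion_le {X : Type*} [MeasurableSpace X] (μ : MeasureTheory.Measure X)
    {ι : Type*} [DecidableEq ι] (s : Finset ι) (I : ι → Set X) (h : X → ℝ≥0∞) :
    ∫⁻ t in ⋃ k ∈ s, I k, h t ∂μ ≤ ∑ k ∈ s, ∫⁻ t in I k, h t ∂μ := by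
  induction s using Finset.induction with
  | empty => simp
  | insert _ _ hns ih =>
    rename_i b s'
    rw [Finset.set_biUnion_insert, Finset.sum_insert hns]
    exact le_trans (lintegral_union_le _ _ _) (add_le_add le_rfl ih)

lemma cover_le (n : ℕ) (a : ℕ → ℝ) (ha : ∀ k < n, 0 < a k)
    (hsum : ∑ k ∈ Finset.range n, a k = 1)
    (α : ℕ → ℝ) (hα0 : α 0 = 0) (hα : ∀ k, α (k + 1) = α k + a k)
    (h : ℝ → ℝ≥0∞) :
    ∫⁻ t in Set.Ioo (0:ℝ) 1, h t
      ≤ ∑ k ∈ Finset.range n, ∫⁻ t in Set.Ioo (α k) (α (k + 1)), h t := by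
  have hαeq := alpha_eq a α hα0 hα
  have hαn : α n = 1 := by rw [hαeq]; exact hsum
  -- the finite exceptional set
  set E : Set ℝ := ↑((Finset.range (n + 1)).image α) with hE
  have hEnull : (volume : Measure ℝ) E = 0 := (Finset.finite_toSet _).measure_zero _
  -- inclusion
  have hincl : Set.Ioo (0:ℝ) 1 ⊆ (⋃ k ∈ Finset.range n, Set.Ioo (α k) (α (k + 1))) ∪ E := by
    intro x hx
    by_cases hxE : x ∈ E
    · exact Or.inr hxE
    · left
      have hne : ∀ k ≤ n, x ≠ α k := by
        intro k hk hxk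
        exact hxE (by
          simp only [hE, Finset.coe_image, Set.mem_image, Finset.mem_coe, Finset.mem_range]
          exact ⟨k, Nat.lt_succ_of_le hk, hxk.symm⟩)
      set S := (Finset.range (n + 1)).filter (fun k => α k < x) with hS
      have hSne : S.Nonempty := ⟨0, by
        simp [hS, Finset.mem_filter, hα0]
        exact hx.1⟩
      set m := S.max' hSne with hm
      have hmS : m ∈ S := S.max'_mem hSne
      have hmlt : α m < x := (Finset.mem_filter.1 hmS).2
      have hmr : m < n + 1 := Finset.mem_range.1 (Finset.mem_filter.1 hmS).1
      have hmn : m < n := by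
        rcases Nat.lt_succ_iff_lt_or_eq.1 hmr with h' | h'
        · exact h'
        · exfalso; rw [h', hαn] at hmlt; exact absurd hx.2 (not_lt.2 hmlt.le)
      have hnotS : m + 1 ∉ S := fun hmem => absurd (S.le_max' _ hmem) (by omega)
      have hxle : x ≤ α (m + 1) := by
        by_contra hlt
        exact hnotS (Finset.mem_filter.2 ⟨Finset.mem_range.2 (by omega), not_le.1 hlt⟩)
      have hxlt : x < α (m + 1) :=
        lt_of_le_of_ne hxle (hne (m + 1) (by omega))
      exact Set.mem_biUnion (Finset.mem_range.2 hmn) ⟨hmlt, hxlt⟩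
  calc ∫⁻ t in Set.Ioo (0:ℝ) 1, h t
      ≤ ∫⁻ t in (⋃ k ∈ Finset.range n, Set.Ioo (α k) (α (k + 1))) ∪ E, h t :=
        lintegral_mono_set hincl
    _ ≤ (∫⁻ t in ⋃ k ∈ Finset.range n, Set.Ioo (α k) (α (k + 1)), h t) + ∫⁻ t in E, h t :=
        lintegral_union_le _ _ _
    _ = ∫⁻ t in ⋃ k ∈ Finset.range n, Set.Ioo (α k) (α (k + 1)), h t := by
        rw [setLIntegral_measure_zero _ _ hEnull, add_zero]
    _ ≤ ∑ k ∈ Finset.range n, ∫⁻ t in Set.Ioo (α k) (α (k + 1)), h t :=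
        lint_biUnion_le _ _ _ _

lemma cov_lemma (α s : ℝ) (hs : 0 < s) (F : ℝ → ℝ≥0∞) (hF : Measurable F) :
    ∫⁻ x in Set.Ioo α (α + s), F ((x - α) / s) =
      ENNReal.ofReal s * ∫⁻ t in Set.Ioo (0:ℝ) 1, F t := by
  have hψ : Measurable fun x : ℝ => (x - α) / s := (measurable_id.sub_const α).div_const s
  have hpre : (fun x : ℝ => (x - α) / s) ⁻¹' Set.Ioo 0 1 = Set.Ioo α (α + s) := by
    ext x
    simp only [Set.mem_preimage, Set.mem_Ioo]
    rw [lt_div_iff₀ hs, div_lt_one hs]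
    constructor <;> intro h <;> constructor <;> linarith [h.1, h.2]
  have hmap : Measure.map (fun x : ℝ => (x - α) / s) volume
      = ENNReal.ofReal s • (volume : Measure ℝ) := by
    have h1 : (fun x : ℝ => (x - α) / s) = (fun y : ℝ => s⁻¹ * y) ∘ (fun x : ℝ => x + (-α)) := by
      funext x; simp [div_eq_inv_mul, sub_eq_add_neg]
    rw [h1, ← Measure.map_map (measurable_const_mul _) (measurable_add_const _)]
    rw [map_add_right_eq_self volume (-α), Real.map_volume_mul_left (inv_ne_zero hs.ne')]
    simp [abs_of_pos hs]
  calc ∫⁻ x in Set.Ioo α (α + s), F ((x - α) / s)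
      = ∫⁻ x, F ((x - α) / s) ∂(volume.restrict ((fun x : ℝ => (x - α) / s) ⁻¹' Set.Ioo 0 1)) := by
        rw [hpre]
    _ = ∫⁻ t, F t ∂((volume.restrict ((fun x : ℝ => (x - α) / s) ⁻¹' Set.Ioo 0 1)).map
          (fun x : ℝ => (x - α) / s)) := (lintegral_map hF hψ).symm
    _ = ∫⁻ t, F t ∂((Measure.map (fun x : ℝ => (x - α) / s) volume).restrict (Set.Ioo 0 1)) := by
        rw [Measure.restrict_map hψ measurableSet_Ioo]
    _ = ENNReal.ofReal s * ∫⁻ t in Set.Ioo (0:ℝ) 1, F t := by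
        rw [hmap, Measure.restrict_smul, lintegral_smul_measure, smul_eq_mul]
lemma key_ineq (n : ℕ) (a c d β c' d' β' : ℕ → ℝ)
    (ha : ∀ k < n, 0 < a k) (hsum : ∑ k ∈ Finset.range n, a k = 1)
    (α : ℕ → ℝ) (hα0 : α 0 = 0) (hα : ∀ k, α (k + 1) = α k + a k)
    (p : ℝ) (hp : 1 ≤ p)
    (f g : ℝ → ℝ) (hfm : Measurable f) (hgm : Measurable g)
    (hfix : ∀ k < n, ∀ᵐ x ∂(volume.restrict (Set.Ioo (α k) (α (k + 1)))),
      f x = β k + c k * ((x - α k) / a k) + d k * f ((x - α k) / a k))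
    (hfix' : ∀ k < n, ∀ᵐ x ∂(volume.restrict (Set.Ioo (α k) (α (k + 1)))),
      g x = β' k + c' k * ((x - α k) / a k) + d' k * g ((x - α k) / a k)) :
    (∫⁻ t in Set.Ioo (0:ℝ) 1, ENNReal.ofReal (|f t - g t| ^ p)) ^ (1/p)
      ≤ (∑ k ∈ Finset.range n,
            ENNReal.ofReal ((|c k - c' k| + |β k - β' k|) ^ p * a k)) ^ (1/p)
        + (∑ k ∈ Finset.range n, ENNReal.ofReal (a k * |d k| ^ p)) ^ (1/p)
            * (∫⁻ t in Set.Ioo (0:ℝ) 1, ENNReal.ofReal (|f t - g t| ^ p)) ^ (1/p)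
        + (∑ k ∈ Finset.range n, ENNReal.ofReal (a k * |d k - d' k| ^ p)) ^ (1/p)
            * (∫⁻ t in Set.Ioo (0:ℝ) 1, ENNReal.ofReal (|g t| ^ p)) ^ (1/p) := by
  have hp0 : 0 < p := lt_of_lt_of_le zero_lt_one hp
  have hrpow1 : ∀ x : ℝ≥0∞, (x ^ p) ^ (1/p) = x := by
    intro x; rw [← ENNReal.rpow_mul, mul_one_div_cancel hp0.ne', ENNReal.rpow_one]
  have hrpow2 : ∀ x : ℝ≥0∞, (x ^ (1/p)) ^ p = x := by
    intro x; rw [← ENNReal.rpow_mul, one_div_mul_cancel hp0.ne', ENNReal.rpow_one]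
  set N := (∫⁻ t in Set.Ioo (0:ℝ) 1, ENNReal.ofReal (|f t - g t| ^ p)) ^ (1/p) with hN
  set G := (∫⁻ t in Set.Ioo (0:ℝ) 1, ENNReal.ofReal (|g t| ^ p)) ^ (1/p) with hG
  -- measurability of the difference p-power
  have hfgm : Measurable fun t => ENNReal.ofReal (|f t - g t| ^ p) :=
    ((hfm.sub hgm).abs.pow_const p).ennreal_ofReal
  have hgm2 : Measurable fun t => ENNReal.ofReal (|g t| ^ p) :=
    (hgm.abs.pow_const p).ennreal_ofReal
  -- per interval bound
  have hstep : ∀ k ∈ Finset.range n,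
      ∫⁻ x in Set.Ioo (α k) (α (k + 1)), ENNReal.ofReal (|f x - g x| ^ p)
        ≤ ENNReal.ofReal (a k) *
          (ENNReal.ofReal (|c k - c' k| + |β k - β' k|)
            + (ENNReal.ofReal (|d k|) * N + ENNReal.ofReal (|d k - d' k|) * G)) ^ p := by
    intro k hk
    rw [Finset.mem_range] at hk
    have hak : 0 < a k := ha k hk
    -- a.e. identity for f - g on the k-th interval
    have hae : ∀ᵐ x ∂(volume.restrict (Set.Ioo (α k) (α (k + 1)))),
        f x - g x = (β k - β' k) + (c k - c' k) * ((x - α k) / a k)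
          + d k * (f ((x - α k) / a k) - g ((x - α k) / a k))
          + (d k - d' k) * g ((x - α k) / a k) := by
      filter_upwards [hfix k hk, hfix' k hk] with x h1 h2
      rw [h1, h2]; ring
    set F : ℝ → ℝ≥0∞ := fun t => ENNReal.ofReal
      (|(β k - β' k) + (c k - c' k) * t + d k * (f t - g t) + (d k - d' k) * g t| ^ p) with hF
    have hFm : Measurable F := by
      apply Measurable.ennreal_ofReal
      apply Measurable.pow_const
      apply Measurable.abs
      exact ((measurable_const.add ((measurable_const.mul measurable_id))).add
        (measurable_const.mul (hfm.sub hgm))).add (measurable_const.mul hgm)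
    have h1 : ∫⁻ x in Set.Ioo (α k) (α (k + 1)), ENNReal.ofReal (|f x - g x| ^ p)
        = ∫⁻ x in Set.Ioo (α k) (α (k + 1)), F ((x - α k) / a k) := by
      apply lintegral_congr_ae
      filter_upwards [hae] with x hx
      rw [hF]; simp only []; rw [hx]
    have h2 : ∫⁻ x in Set.Ioo (α k) (α (k + 1)), F ((x - α k) / a k)
        = ENNReal.ofReal (a k) * ∫⁻ t in Set.Ioo (0:ℝ) 1, F t := by
      rw [hα k]; exact cov_lemma (α k) (a k) hak F hFm
    rw [h1, h2]
    apply mul_le_mul_right ?_ (ENNReal.ofReal (a k))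
    -- now bound ∫ F over (0,1)
    set u : ℝ → ℝ≥0∞ := fun _ => ENNReal.ofReal (|c k - c' k| + |β k - β' k|) with hu
    set v : ℝ → ℝ≥0∞ := fun t => ENNReal.ofReal (|d k| * |f t - g t|) with hv
    set w : ℝ → ℝ≥0∞ := fun t => ENNReal.ofReal (|d k - d' k| * |g t|) with hw
    have hvm : Measurable v := (measurable_const.mul (hfm.sub hgm).abs).ennreal_ofReal
    have hwm : Measurable w := (measurable_const.mul hgm.abs).ennreal_ofReal
    have hbound : ∫⁻ t in Set.Ioo (0:ℝ) 1, F t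
        ≤ ∫⁻ t in Set.Ioo (0:ℝ) 1, ((u + (v + w)) t) ^ p := by
      apply lintegral_mono_ae
      filter_upwards [ae_restrict_mem measurableSet_Ioo] with t ht
      have habs : |(β k - β' k) + (c k - c' k) * t + d k * (f t - g t) + (d k - d' k) * g t|
          ≤ (|c k - c' k| + |β k - β' k|) + (|d k| * |f t - g t| + |d k - d' k| * |g t|) := by
        have h01 : |t| ≤ 1 := by
          rw [abs_le]; constructor <;> [linarith [ht.1]; linarith [ht.2]]
        calc |(β k - β' k) + (c k - c' k) * t + d k * (f t - g t) + (d k - d' k) * g t|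
            ≤ |(β k - β' k) + (c k - c' k) * t| + |d k * (f t - g t)| + |(d k - d' k) * g t| :=
              (abs_add_le _ _).trans (add_le_add_left (abs_add_le _ _) _)
          _ ≤ (|β k - β' k| + |c k - c' k| * |t|) + |d k| * |f t - g t|
                + |d k - d' k| * |g t| := by
              rw [abs_mul, abs_mul]
              exact add_le_add_left (add_le_add_left
                ((abs_add_le _ _).trans (by rw [abs_mul])) _) _
          _ ≤ _ := by
              nlinarith [abs_nonneg (c k - c' k), abs_nonneg (β k - β' k), h01,
                abs_nonneg t]
      have : F t = (ENNReal.ofReal (|(β k - β' k) + (c k - c' k) * t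
          + d k * (f t - g t) + (d k - d' k) * g t|)) ^ p := by
        rw [hF]; simp only []
        rw [ENNReal.ofReal_rpow_of_nonneg (abs_nonneg _) hp0.le]
      rw [this]
      apply ENNReal.rpow_le_rpow _ hp0.le
      simp only [Pi.add_apply, hu, hv, hw]
      calc ENNReal.ofReal (|(β k - β' k) + (c k - c' k) * t
            + d k * (f t - g t) + (d k - d' k) * g t|)
          ≤ ENNReal.ofReal ((|c k - c' k| + |β k - β' k|)
              + (|d k| * |f t - g t| + |d k - d' k| * |g t|)) := ENNReal.ofReal_le_ofReal habs
        _ = _ := by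
            rw [ENNReal.ofReal_add (by positivity) (by positivity),
              ENNReal.ofReal_add (by positivity) (by positivity),
              ENNReal.ofReal_add (by positivity) (by positivity)]
    -- Minkowski
    have hmink : (∫⁻ t in Set.Ioo (0:ℝ) 1, ((u + (v + w)) t) ^ p) ^ (1/p)
        ≤ (∫⁻ t in Set.Ioo (0:ℝ) 1, (u t) ^ p) ^ (1/p)
          + ((∫⁻ t in Set.Ioo (0:ℝ) 1, (v t) ^ p) ^ (1/p)
            + (∫⁻ t in Set.Ioo (0:ℝ) 1, (w t) ^ p) ^ (1/p)) := by
      refine (ENNReal.lintegral_Lp_add_le measurable_const.aemeasurable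
        ((hvm.add hwm).aemeasurable) hp).trans ?_
      apply add_le_add_right
      exact ENNReal.lintegral_Lp_add_le hvm.aemeasurable hwm.aemeasurable hp
    have hu_int : (∫⁻ t in Set.Ioo (0:ℝ) 1, (u t) ^ p) ^ (1/p)
        = ENNReal.ofReal (|c k - c' k| + |β k - β' k|) := by
      rw [hu]; simp only []
      rw [lintegral_const, Measure.restrict_apply MeasurableSet.univ, Set.univ_inter,
        Real.volume_Ioo, sub_zero, ENNReal.ofReal_one, mul_one, hrpow1]
    have hv_int : (∫⁻ t in Set.Ioo (0:ℝ) 1, (v t) ^ p) ^ (1/p)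
        = ENNReal.ofReal (|d k|) * N := by
      have : ∀ t : ℝ, (v t) ^ p
          = ENNReal.ofReal (|d k|) ^ p * ENNReal.ofReal (|f t - g t| ^ p) := by
        intro t
        rw [hv]; simp only []
        rw [ENNReal.ofReal_mul (abs_nonneg _), ENNReal.mul_rpow_of_nonneg _ _ hp0.le,
          ENNReal.ofReal_rpow_of_nonneg (abs_nonneg _) hp0.le,
          ENNReal.ofReal_rpow_of_nonneg (abs_nonneg _) hp0.le]
      simp_rw [this]
      rw [lintegral_const_mul _ hfgm, ENNReal.mul_rpow_of_nonneg _ _ (by positivity),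
        hrpow1, hN]
    have hw_int : (∫⁻ t in Set.Ioo (0:ℝ) 1, (w t) ^ p) ^ (1/p)
        = ENNReal.ofReal (|d k - d' k|) * G := by
      have : ∀ t : ℝ, (w t) ^ p
          = ENNReal.ofReal (|d k - d' k|) ^ p * ENNReal.ofReal (|g t| ^ p) := by
        intro t
        rw [hw]; simp only []
        rw [ENNReal.ofReal_mul (abs_nonneg _), ENNReal.mul_rpow_of_nonneg _ _ hp0.le,
          ENNReal.ofReal_rpow_of_nonneg (abs_nonneg _) hp0.le,
          ENNReal.ofReal_rpow_of_nonneg (abs_nonneg _) hp0.le]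
      simp_rw [this]
      rw [lintegral_const_mul _ hgm2, ENNReal.mul_rpow_of_nonneg _ _ (by positivity),
        hrpow1, hG]
    have hfinal : (∫⁻ t in Set.Ioo (0:ℝ) 1, F t) ^ (1/p)
        ≤ ENNReal.ofReal (|c k - c' k| + |β k - β' k|)
          + (ENNReal.ofReal (|d k|) * N + ENNReal.ofReal (|d k - d' k|) * G) := by
      calc (∫⁻ t in Set.Ioo (0:ℝ) 1, F t) ^ (1/p)
          ≤ (∫⁻ t in Set.Ioo (0:ℝ) 1, ((u + (v + w)) t) ^ p) ^ (1/p) :=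
            ENNReal.rpow_le_rpow hbound (by positivity)
        _ ≤ _ := by rw [← hu_int, ← hv_int, ← hw_int]; exact hmink
    calc ∫⁻ t in Set.Ioo (0:ℝ) 1, F t
        = ((∫⁻ t in Set.Ioo (0:ℝ) 1, F t) ^ (1/p)) ^ p := (hrpow2 _).symm
      _ ≤ _ := ENNReal.rpow_le_rpow hfinal hp0.le
  -- now sum over k
  have hNp : N ^ p = ∫⁻ t in Set.Ioo (0:ℝ) 1, ENNReal.ofReal (|f t - g t| ^ p) := hrpow2 _
  have hsum1 : N ^ p ≤ ∑ k ∈ Finset.range n,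
      (ENNReal.ofReal (a k) ^ (1/p) *
        (ENNReal.ofReal (|c k - c' k| + |β k - β' k|)
          + (ENNReal.ofReal (|d k|) * N + ENNReal.ofReal (|d k - d' k|) * G))) ^ p := by
    rw [hNp]
    refine (cover_le n a ha hsum α hα0 hα _).trans ?_
    refine Finset.sum_le_sum ?_
    intro k hk
    refine (hstep k hk).trans (le_of_eq ?_)
    rw [ENNReal.mul_rpow_of_nonneg _ _ hp0.le, hrpow2]
  set X : ℕ → ℝ≥0∞ := fun k => ENNReal.ofReal (a k) ^ (1/p)
    * ENNReal.ofReal (|c k - c' k| + |β k - β' k|) with hX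
  set Y : ℕ → ℝ≥0∞ := fun k => ENNReal.ofReal (a k) ^ (1/p)
    * (ENNReal.ofReal (|d k|) * N) with hY
  set Z : ℕ → ℝ≥0∞ := fun k => ENNReal.ofReal (a k) ^ (1/p)
    * (ENNReal.ofReal (|d k - d' k|) * G) with hZ
  have hN_le : N ≤ (∑ k ∈ Finset.range n, (X k + (Y k + Z k)) ^ p) ^ (1/p) := by
    calc N = (N ^ p) ^ (1/p) := (hrpow1 _).symm
      _ ≤ _ := by
        refine ENNReal.rpow_le_rpow ?_ (by positivity)
        refine hsum1.trans (le_of_eq (Finset.sum_congr rfl fun k _ => ?_))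
        rw [hX, hY, hZ]; simp only []; rw [mul_add, mul_add]
  have hXsum : (∑ k ∈ Finset.range n, X k ^ p) ^ (1/p)
      = (∑ k ∈ Finset.range n,
          ENNReal.ofReal ((|c k - c' k| + |β k - β' k|) ^ p * a k)) ^ (1/p) := by
    congr 1
    refine Finset.sum_congr rfl fun k _ => ?_
    rw [hX]; simp only []
    rw [ENNReal.mul_rpow_of_nonneg _ _ hp0.le, hrpow2,
      ENNReal.ofReal_rpow_of_nonneg (by positivity) hp0.le,
      ENNReal.ofReal_mul (by positivity), mul_comm]
  have hYsum : (∑ k ∈ Finset.range n, Y k ^ p) ^ (1/p)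
      = (∑ k ∈ Finset.range n, ENNReal.ofReal (a k * |d k| ^ p)) ^ (1/p) * N := by
    have : ∀ k, Y k ^ p = ENNReal.ofReal (a k * |d k| ^ p) * N ^ p := by
      intro k
      rw [hY]; simp only []
      rw [ENNReal.mul_rpow_of_nonneg _ _ hp0.le, hrpow2,
        ENNReal.mul_rpow_of_nonneg _ _ hp0.le,
        ENNReal.ofReal_rpow_of_nonneg (abs_nonneg _) hp0.le,
        ENNReal.ofReal_mul' (by positivity), mul_assoc]
    simp_rw [this]
    rw [← Finset.sum_mul, ENNReal.mul_rpow_of_nonneg _ _ (by positivity), hrpow1]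
  have hZsum : (∑ k ∈ Finset.range n, Z k ^ p) ^ (1/p)
      = (∑ k ∈ Finset.range n, ENNReal.ofReal (a k * |d k - d' k| ^ p)) ^ (1/p) * G := by
    have : ∀ k, Z k ^ p = ENNReal.ofReal (a k * |d k - d' k| ^ p) * G ^ p := by
      intro k
      rw [hZ]; simp only []
      rw [ENNReal.mul_rpow_of_nonneg _ _ hp0.le, hrpow2,
        ENNReal.mul_rpow_of_nonneg _ _ hp0.le,
        ENNReal.ofReal_rpow_of_nonneg (abs_nonneg _) hp0.le,
        ENNReal.ofReal_mul' (by positivity), mul_assoc]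
    simp_rw [this]
    rw [← Finset.sum_mul, ENNReal.mul_rpow_of_nonneg _ _ (by positivity), hrpow1]
  calc N ≤ (∑ k ∈ Finset.range n, (X k + (Y k + Z k)) ^ p) ^ (1/p) := hN_le
    _ ≤ (∑ k ∈ Finset.range n, X k ^ p) ^ (1/p)
        + (∑ k ∈ Finset.range n, (Y k + Z k) ^ p) ^ (1/p) :=
      ENNReal.Lp_add_le (Finset.range n) X (fun k => Y k + Z k) hp
    _ ≤ (∑ k ∈ Finset.range n, X k ^ p) ^ (1/p)
        + ((∑ k ∈ Finset.range n, Y k ^ p) ^ (1/p)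
          + (∑ k ∈ Finset.range n, Z k ^ p) ^ (1/p)) :=
      add_le_add_right (ENNReal.Lp_add_le (Finset.range n) Y Z hp) _
    _ = _ := by rw [hXsum, hYsum, hZsum, add_assoc]
set_option maxHeartbeats 2000000

/-- Continuous dependence of the fixed point on the parameters `c_k, d_k, β_k`:
an explicit bound on `‖f - g‖_p` for the fixed points of two similarity operators
sharing the same partition. -/
theorem stmt_10 (n : ℕ) (hn : 1 < n) (a c d β c' d' β' : ℕ → ℝ)
    (ha : ∀ k < n, 0 < a k) (hsum : ∑ k ∈ Finset.range n, a k = 1)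
    (α : ℕ → ℝ) (hα0 : α 0 = 0) (hα : ∀ k, α (k + 1) = α k + a k)
    (p : ℝ) (hp : 1 ≤ p)
    (hr : ∑ k ∈ Finset.range n, a k * |d k| ^ p < 1)
    (hr' : ∑ k ∈ Finset.range n, a k * |d' k| ^ p < 1)
    (f g : ℝ → ℝ) (hfm : Measurable f) (hgm : Measurable g)
    (hf : IntegrableOn (fun t => |f t| ^ p) (Set.Ioo 0 1))
    (hg : IntegrableOn (fun t => |g t| ^ p) (Set.Ioo 0 1))
    (hfix : ∀ k < n, ∀ᵐ x ∂(volume.restrict (Set.Ioo (α k) (α (k + 1)))),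
      f x = β k + c k * ((x - α k) / a k) + d k * f ((x - α k) / a k))
    (hfix' : ∀ k < n, ∀ᵐ x ∂(volume.restrict (Set.Ioo (α k) (α (k + 1)))),
      g x = β' k + c' k * ((x - α k) / a k) + d' k * g ((x - α k) / a k)) :
    (∫ t in Set.Ioo (0:ℝ) 1, |f t - g t| ^ p) ^ (1 / p)
      ≤ ((2:ℝ) ^ p * (∑ k ∈ Finset.range n,
              (|c k - c' k| + |β k - β' k|) ^ p * a k) ^ (1 / p)
          + (2:ℝ) ^ (p - 1) * (∑ k ∈ Finset.range n, a k * |d k - d' k| ^ p) ^ (1 / p)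
              * ((∫ t in Set.Ioo (0:ℝ) 1, |f t| ^ p) ^ (1 / p)
                  + (∫ t in Set.Ioo (0:ℝ) 1, |g t| ^ p) ^ (1 / p)))
        / (2 - (∑ k ∈ Finset.range n, a k * |d k| ^ p) ^ (1 / p)
             - (∑ k ∈ Finset.range n, a k * |d' k| ^ p) ^ (1 / p)) := by
  have hp0 : 0 < p := lt_of_lt_of_le zero_lt_one hp
  -- finiteness of the lintegrals
  have hlt_of_int : ∀ h : ℝ → ℝ, IntegrableOn (fun t => |h t| ^ p) (Set.Ioo 0 1) →
      ∫⁻ t in Set.Ioo (0:ℝ) 1, ENNReal.ofReal (|h t| ^ p) < ⊤ := by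
    intro h hint
    have := hint.2
    rw [HasFiniteIntegral] at this
    refine lt_of_eq_of_lt ?_ this
    apply lintegral_congr
    intro t
    rw [← Real.enorm_eq_ofReal (by positivity)]
  have hLf : ∫⁻ t in Set.Ioo (0:ℝ) 1, ENNReal.ofReal (|f t| ^ p) < ⊤ := hlt_of_int f hf
  have hLg : ∫⁻ t in Set.Ioo (0:ℝ) 1, ENNReal.ofReal (|g t| ^ p) < ⊤ := hlt_of_int g hg
  have hfgm : Measurable fun t => ENNReal.ofReal (|f t - g t| ^ p) :=
    ((hfm.sub hgm).abs.pow_const p).ennreal_ofReal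
  have hfm2 : Measurable fun t => ENNReal.ofReal (|f t| ^ p) :=
    (hfm.abs.pow_const p).ennreal_ofReal
  have hgm2 : Measurable fun t => ENNReal.ofReal (|g t| ^ p) :=
    (hgm.abs.pow_const p).ennreal_ofReal
  have hLN : ∫⁻ t in Set.Ioo (0:ℝ) 1, ENNReal.ofReal (|f t - g t| ^ p) < ⊤ := by
    have hptw : ∀ t : ℝ, ENNReal.ofReal (|f t - g t| ^ p)
        ≤ ENNReal.ofReal ((2:ℝ) ^ p) *
          (ENNReal.ofReal (|f t| ^ p) + ENNReal.ofReal (|g t| ^ p)) := by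
      intro t
      rw [← ENNReal.ofReal_add (by positivity) (by positivity),
        ← ENNReal.ofReal_mul (by positivity)]
      apply ENNReal.ofReal_le_ofReal
      have h1 : |f t - g t| ≤ 2 * max |f t| |g t| := by
        rcases le_total |f t| |g t| with h | h
        · calc |f t - g t| ≤ |f t| + |g t| := abs_sub _ _
            _ ≤ 2 * max |f t| |g t| := by rw [max_eq_right h]; linarith
        · calc |f t - g t| ≤ |f t| + |g t| := abs_sub _ _
            _ ≤ 2 * max |f t| |g t| := by rw [max_eq_left h]; linarith
      calc |f t - g t| ^ p ≤ (2 * max |f t| |g t|) ^ p :=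
            Real.rpow_le_rpow (abs_nonneg _) h1 hp0.le
        _ = 2 ^ p * (max |f t| |g t|) ^ p :=
            Real.mul_rpow (by norm_num) (le_max_of_le_left (abs_nonneg _))
        _ ≤ 2 ^ p * (|f t| ^ p + |g t| ^ p) := by
            gcongr
            rcases le_total |f t| |g t| with h | h
            · rw [max_eq_right h]; nlinarith [Real.rpow_nonneg (abs_nonneg (f t)) p]
            · rw [max_eq_left h]; nlinarith [Real.rpow_nonneg (abs_nonneg (g t)) p]
    calc ∫⁻ t in Set.Ioo (0:ℝ) 1, ENNReal.ofReal (|f t - g t| ^ p)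
        ≤ ∫⁻ t in Set.Ioo (0:ℝ) 1, ENNReal.ofReal ((2:ℝ) ^ p) *
            (ENNReal.ofReal (|f t| ^ p) + ENNReal.ofReal (|g t| ^ p)) :=
          lintegral_mono hptw
      _ = ENNReal.ofReal ((2:ℝ) ^ p) *
            (∫⁻ t in Set.Ioo (0:ℝ) 1, (ENNReal.ofReal (|f t| ^ p)
              + ENNReal.ofReal (|g t| ^ p))) := lintegral_const_mul _ (hfm2.add hgm2)
      _ = ENNReal.ofReal ((2:ℝ) ^ p) *
            ((∫⁻ t in Set.Ioo (0:ℝ) 1, ENNReal.ofReal (|f t| ^ p))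
              + ∫⁻ t in Set.Ioo (0:ℝ) 1, ENNReal.ofReal (|g t| ^ p)) := by
          rw [lintegral_add_left hfm2]
      _ < ⊤ := by
          apply ENNReal.mul_lt_top ENNReal.ofReal_lt_top
          exact ENNReal.add_lt_top.2 ⟨hLf, hLg⟩
  -- conversion helpers
  have hof_int : ∀ h : ℝ → ℝ, Measurable h →
      (∫⁻ t in Set.Ioo (0:ℝ) 1, ENNReal.ofReal (|h t| ^ p)) ≠ ⊤ →
      (∫⁻ t in Set.Ioo (0:ℝ) 1, ENNReal.ofReal (|h t| ^ p)) ^ (1/p)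
        = ENNReal.ofReal ((∫ t in Set.Ioo (0:ℝ) 1, |h t| ^ p) ^ (1/p)) := by
    intro h hm hne
    have heq : ∫ t in Set.Ioo (0:ℝ) 1, |h t| ^ p
        = (∫⁻ t in Set.Ioo (0:ℝ) 1, ENNReal.ofReal (|h t| ^ p)).toReal := by
      apply integral_eq_lintegral_of_nonneg_ae
      · exact Filter.Eventually.of_forall fun t => by positivity
      · exact (hm.abs.pow_const p).aestronglyMeasurable
    rw [heq, ← ENNReal.ofReal_rpow_of_nonneg ENNReal.toReal_nonneg (by positivity),
      ENNReal.ofReal_toReal hne]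
  have hof_sum : ∀ u : ℕ → ℝ, (∀ k ∈ Finset.range n, 0 ≤ u k) →
      (∑ k ∈ Finset.range n, ENNReal.ofReal (u k)) ^ (1/p)
        = ENNReal.ofReal ((∑ k ∈ Finset.range n, u k) ^ (1/p)) := by
    intro u hu
    rw [← ENNReal.ofReal_sum_of_nonneg hu,
      ENNReal.ofReal_rpow_of_nonneg (Finset.sum_nonneg hu) (by positivity)]
  have key1 := key_ineq n a c d β c' d' β' ha hsum α hα0 hα p hp f g hfm hgm hfix hfix'
  have key2 := key_ineq n a c' d' β' c d β ha hsum α hα0 hα p hp g f hgm hfm hfix' hfix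
  have habs1 : ∀ t : ℝ, |g t - f t| = |f t - g t| := fun t => abs_sub_comm _ _
  have habs2 : ∀ k, |c' k - c k| = |c k - c' k| := fun k => abs_sub_comm _ _
  have habs3 : ∀ k, |β' k - β k| = |β k - β' k| := fun k => abs_sub_comm _ _
  have habs4 : ∀ k, |d' k - d k| = |d k - d' k| := fun k => abs_sub_comm _ _
  simp_rw [habs1, habs2, habs3, habs4] at key2
  have eN := hof_int (fun t => f t - g t) (hfm.sub hgm) hLN.ne
  have eF := hof_int f hfm hLf.ne
  have eG := hof_int g hgm hLg.ne
  have eA := hof_sum (fun k => (|c k - c' k| + |β k - β' k|) ^ p * a k)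
    (fun k hk => mul_nonneg (by positivity) (ha k (Finset.mem_range.1 hk)).le)
  have eR := hof_sum (fun k => a k * |d k| ^ p)
    (fun k hk => mul_nonneg (ha k (Finset.mem_range.1 hk)).le (by positivity))
  have eR' := hof_sum (fun k => a k * |d' k| ^ p)
    (fun k hk => mul_nonneg (ha k (Finset.mem_range.1 hk)).le (by positivity))
  have eD := hof_sum (fun k => a k * |d k - d' k| ^ p)
    (fun k hk => mul_nonneg (ha k (Finset.mem_range.1 hk)).le (by positivity))
  rw [eN, eG, eA, eR, eD] at key1
  rw [eN, eF, eA, eR', eD] at key2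
  -- real abbreviations and nonnegativity
  set N0 : ℝ := (∫ t in Set.Ioo (0:ℝ) 1, |f t - g t| ^ p) ^ (1/p) with hN0d
  set F0 : ℝ := (∫ t in Set.Ioo (0:ℝ) 1, |f t| ^ p) ^ (1/p) with hF0d
  set G0 : ℝ := (∫ t in Set.Ioo (0:ℝ) 1, |g t| ^ p) ^ (1/p) with hG0d
  set A0 : ℝ := (∑ k ∈ Finset.range n, (|c k - c' k| + |β k - β' k|) ^ p * a k) ^ (1/p)
    with hA0d
  set R0 : ℝ := (∑ k ∈ Finset.range n, a k * |d k| ^ p) ^ (1/p) with hR0d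
  set R0' : ℝ := (∑ k ∈ Finset.range n, a k * |d' k| ^ p) ^ (1/p) with hR0d'
  set D0 : ℝ := (∑ k ∈ Finset.range n, a k * |d k - d' k| ^ p) ^ (1/p) with hD0d
  have hN0 : 0 ≤ N0 := Real.rpow_nonneg (integral_nonneg fun t => by positivity) _
  have hF0 : 0 ≤ F0 := Real.rpow_nonneg (integral_nonneg fun t => by positivity) _
  have hG0 : 0 ≤ G0 := Real.rpow_nonneg (integral_nonneg fun t => by positivity) _
  have hA0 : 0 ≤ A0 := Real.rpow_nonneg (Finset.sum_nonneg fun k hk =>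
    mul_nonneg (by positivity) (ha k (Finset.mem_range.1 hk)).le) _
  have hR0 : 0 ≤ R0 := Real.rpow_nonneg (Finset.sum_nonneg fun k hk =>
    mul_nonneg (ha k (Finset.mem_range.1 hk)).le (by positivity)) _
  have hR0' : 0 ≤ R0' := Real.rpow_nonneg (Finset.sum_nonneg fun k hk =>
    mul_nonneg (ha k (Finset.mem_range.1 hk)).le (by positivity)) _
  have hD0 : 0 ≤ D0 := Real.rpow_nonneg (Finset.sum_nonneg fun k hk =>
    mul_nonneg (ha k (Finset.mem_range.1 hk)).le (by positivity)) _
  -- extract real inequalities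
  rw [← ENNReal.ofReal_mul hR0, ← ENNReal.ofReal_mul hD0,
    ← ENNReal.ofReal_add hA0 (mul_nonneg hR0 hN0),
    ← ENNReal.ofReal_add (add_nonneg hA0 (mul_nonneg hR0 hN0)) (mul_nonneg hD0 hG0),
    ENNReal.ofReal_le_ofReal_iff (by positivity)] at key1
  rw [← ENNReal.ofReal_mul hR0', ← ENNReal.ofReal_mul hD0,
    ← ENNReal.ofReal_add hA0 (mul_nonneg hR0' hN0),
    ← ENNReal.ofReal_add (add_nonneg hA0 (mul_nonneg hR0' hN0)) (mul_nonneg hD0 hF0),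
    ENNReal.ofReal_le_ofReal_iff (by positivity)] at key2
  -- final arithmetic
  have hR0lt : R0 < 1 := by
    rw [hR0d]
    exact Real.rpow_lt_one (Finset.sum_nonneg fun k hk =>
      mul_nonneg (ha k (Finset.mem_range.1 hk)).le (by positivity)) hr (by positivity)
  have hR0lt' : R0' < 1 := by
    rw [hR0d']
    exact Real.rpow_lt_one (Finset.sum_nonneg fun k hk =>
      mul_nonneg (ha k (Finset.mem_range.1 hk)).le (by positivity)) hr' (by positivity)
  have hden : (0:ℝ) < 2 - R0 - R0' := by linarith
  rw [le_div_iff₀ hden]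
  have h2p : (2:ℝ) ≤ 2 ^ p := by
    calc (2:ℝ) = 2 ^ (1:ℝ) := (Real.rpow_one 2).symm
      _ ≤ 2 ^ p := Real.rpow_le_rpow_of_exponent_le one_le_two hp
  have h2p1 : (1:ℝ) ≤ 2 ^ (p - 1) := by
    calc (1:ℝ) = 2 ^ (0:ℝ) := (Real.rpow_zero 2).symm
      _ ≤ 2 ^ (p - 1) := Real.rpow_le_rpow_of_exponent_le one_le_two (by linarith)
  nlinarith [key1, key2, mul_nonneg hD0 hF0, mul_nonneg hD0 hG0,
    mul_nonneg (by linarith : (0:ℝ) ≤ 2 ^ p - 2) hA0,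
    mul_nonneg (by linarith : (0:ℝ) ≤ 2 ^ (p - 1) - 1)
      (add_nonneg (mul_nonneg hD0 hF0) (mul_nonneg hD0 hG0))]
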